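/- For all 0 ≤ τ < 1 and 0 ≤ c ≤ 1, the target pool's reward R_p = β/(1-τα) + cτα(1-α-β)/(1-τα) is strictly less than β + τα, the pool's reward in the absence of an FAW attack. -/

import Mathlib

theorem faw_pool_reward_lt_no_attack (α β τ c : ℝ)
    (hα0 : 0 < α) (hα1 : α < 1 / 2) (hβ : 0 < β) (hαβ : α + β < 1)
    (hτ0 : 0 < τ) (hτ1 : τ < 1) (hc0 : 0 ≤ c) (hc1 : c ≤ 1) :
    β / (1 - τ * α) + c * (τ * α) * (1 - α - β) / (1 - τ * α) < β + τ * α := by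
  have hd : 0 < 1 - τ * α := by nlinarith
  rw [← add_div, div_lt_iff₀ hd]
  have hta : 0 < τ * α := mul_pos hτ0 hα0
  have h1 : c * (1 - α - β) ≤ 1 - α - β := by nlinarith
  have h2 : τ * α < α := by nlinarith
  nlinarith [mul_lt_mul_of_pos_left (show c * (1 - α - β) < 1 - τ * α - β by nlinarith) hta]
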